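/- Let u ∈ ℋ and α, β ∈ ℝ, and define B₂ := ((α²+β²)/2)‖D₁₊ Δ₂ u‖²_{ℓ²(𝓘)} + 4αβ ⟨D₁,₀ D₂,₀ u ; Δ₂ u⟩_{ℓ²(𝓘)}. Then B₂ ≤ (α²+β²)·( ‖Δ₂ u‖²_{ℓ²(𝓘)} + ‖D₁₊ D₂₊ u‖²_{ℓ²(𝓘)} ) − ((α²+β²)/2)·∑_{k∈ℤ} ((Δ₂ u)_{0,k})². -/

import Mathlib

noncomputable section

/-- Forward difference in the first variable. -/
def D1p (u : ℤ → ℤ → ℝ) : ℤ → ℤ → ℝ := fun j k => u (j + 1) k - u j k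
/-- Backward difference in the first variable. -/
def D1m (u : ℤ → ℤ → ℝ) : ℤ → ℤ → ℝ := fun j k => u j k - u (j - 1) k
/-- Forward difference in the second variable. -/
def D2p (u : ℤ → ℤ → ℝ) : ℤ → ℤ → ℝ := fun j k => u j (k + 1) - u j k
/-- Backward difference in the second variable. -/
def D2m (u : ℤ → ℤ → ℝ) : ℤ → ℤ → ℝ := fun j k => u j k - u j (k - 1)
/-- Centered difference in the first variable. -/
def D10 (u : ℤ → ℤ → ℝ) : ℤ → ℤ → ℝ := fun j k => (D1p u j k + D1m u j k) / 2
/-- Centered difference in the second variable. -/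
def D20 (u : ℤ → ℤ → ℝ) : ℤ → ℤ → ℝ := fun j k => (D2p u j k + D2m u j k) / 2
/-- Discrete Laplacian in the first variable. -/
def L1 (u : ℤ → ℤ → ℝ) : ℤ → ℤ → ℝ := D1p (D1m u)
/-- Discrete Laplacian in the second variable. -/
def L2 (u : ℤ → ℤ → ℝ) : ℤ → ℤ → ℝ := D2p (D2m u)

/-- Squared ℓ²(ℤ²) norm. -/
def sqZ (u : ℤ → ℤ → ℝ) : ℝ := ∑' p : ℤ × ℤ, (u p.1 p.2) ^ 2
/-- ℓ²(ℤ²) scalar product. -/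
def ipZ (u v : ℤ → ℤ → ℝ) : ℝ := ∑' p : ℤ × ℤ, u p.1 p.2 * v p.1 p.2

/-- Squared ℓ²(𝓘) norm over the interior indices 𝓘 = ℕ × ℤ of the half-space grid. -/
def sqH (u : ℤ → ℤ → ℝ) : ℝ := ∑' p : ℕ × ℤ, (u (p.1 : ℤ) p.2) ^ 2
/-- ℓ²(𝓘) scalar product over the interior indices 𝓘 = ℕ × ℤ. -/
def ipH (u v : ℤ → ℤ → ℝ) : ℝ := ∑' p : ℕ × ℤ, u (p.1 : ℤ) p.2 * v (p.1 : ℤ) p.2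
/-- Membership in ℋ : square-summable on the half-space grid and satisfying the
extrapolation (Neumann) boundary condition `u (-1) k = u 0 k`. -/
def memH (u : ℤ → ℤ → ℝ) : Prop :=
  (∀ k : ℤ, u (-1) k = u 0 k) ∧ Summable (fun p : ℕ × ℤ => (u (p.1 : ℤ) p.2) ^ 2)

/-- Squared ℓ²(𝔦) norm over the interior indices 𝔦 = ℕ × ℕ of the quarter-space grid. -/
def sqQ (u : ℤ → ℤ → ℝ) : ℝ := ∑' p : ℕ × ℕ, (u (p.1 : ℤ) (p.2 : ℤ)) ^ 2
/-- ℓ²(𝔦) scalar product over the interior indices 𝔦 = ℕ × ℕ. -/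
def ipQ (u v : ℤ → ℤ → ℝ) : ℝ :=
  ∑' p : ℕ × ℕ, u (p.1 : ℤ) (p.2 : ℤ) * v (p.1 : ℤ) (p.2 : ℤ)
/-- Membership in 𝔥 : square-summable on the quarter-space grid, satisfying the
extrapolation boundary conditions on both sides and the corner condition. -/
def memQ (u : ℤ → ℤ → ℝ) : Prop :=
  (∀ k : ℤ, -1 ≤ k → u (-1) k = u 0 k) ∧ (∀ j : ℤ, 0 ≤ j → u j (-1) = u j 0) ∧
    Summable (fun p : ℕ × ℕ => (u (p.1 : ℤ) (p.2 : ℤ)) ^ 2)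

/-- The skew-selfadjoint part `v` in the decomposition of the Lax-Wendroff scheme. -/
def vop (α β : ℝ) (u : ℤ → ℤ → ℝ) : ℤ → ℤ → ℝ :=
  fun j k => -α * D10 u j k - β * D20 u j k
/-- The selfadjoint part `w` in the decomposition of the Lax-Wendroff scheme. -/
def wop (α β : ℝ) (u : ℤ → ℤ → ℝ) : ℤ → ℤ → ℝ :=
  fun j k => -(α ^ 2 / 2) * L1 u j k - (β ^ 2 / 2) * L2 u j k
    - α * β * D10 (D20 u) j k + ((α ^ 2 + β ^ 2) / 8) * L1 (L2 u) j k

namespace HL8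
open Function

variable {ι : Type*}

lemma sqs_add {f g : ι → ℝ} (hf : Summable fun i => (f i)^2) (hg : Summable fun i => (g i)^2) :
    Summable fun i => (f i + g i)^2 := by
  refine Summable.of_nonneg_of_le (fun i => sq_nonneg _) (fun i => ?_) ((hf.add hg).mul_left 2)
  nlinarith [sq_nonneg (f i - g i)]

lemma sqs_smul (c : ℝ) {f : ι → ℝ} (hf : Summable fun i => (f i)^2) :
    Summable fun i => (c * f i)^2 := by
  simpa [mul_pow] using hf.mul_left (c^2)

lemma summable_mul_of_sq {f g : ι → ℝ} (hf : Summable fun i => (f i)^2)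
    (hg : Summable fun i => (g i)^2) : Summable fun i => f i * g i := by
  apply Summable.of_abs
  refine Summable.of_nonneg_of_le (fun i => abs_nonneg _) (fun i => ?_)
    ((hf.add hg).mul_left (1/2))
  nlinarith [abs_mul (f i) (g i), sq_nonneg (|f i| - |g i|), sq_abs (f i), sq_abs (g i)]

lemma kshift (F : ℕ × ℤ → ℝ) (b : ℤ) :
    ∑' p : ℕ × ℤ, F (p.1, p.2 + b) = ∑' p : ℕ × ℤ, F p := by
  exact ((Equiv.refl ℕ).prodCongr (Equiv.addRight b)).tsum_eq F

lemma jsucc_summable {F : ℕ × ℤ → ℝ} (h : Summable F) :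
    Summable fun p : ℕ × ℤ => F (p.1 + 1, p.2) :=
  h.comp_injective (fun p q hpq => by
    simp only [Prod.mk.injEq] at hpq; exact Prod.ext (by omega) hpq.2)

lemma jshift {F : ℕ × ℤ → ℝ} (h : Summable F) :
    ∑' p : ℕ × ℤ, F p = (∑' k : ℤ, F (0, k)) + ∑' p : ℕ × ℤ, F (p.1 + 1, p.2) := by
  rw [Summable.tsum_prod h, Summable.tsum_eq_zero_add h.prod]
  congr 1
  rw [Summable.tsum_prod (jsucc_summable h)]

lemma summable_of_pieces {F : ℕ × ℤ → ℝ}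
    (h0 : Summable fun k : ℤ => F (0, k))
    (h1 : Summable fun p : ℕ × ℤ => F (p.1 + 1, p.2)) : Summable F := by
  have hg : Injective (fun k : ℤ => ((0 : ℕ), k)) := fun a b hab => by
    simpa using congrArg Prod.snd hab
  have hg' : Injective (fun p : ℕ × ℤ => (p.1 + 1, p.2)) := fun p q hpq => by
    simp only [Prod.mk.injEq] at hpq; exact Prod.ext (by omega) hpq.2
  have e0 : Summable (fun p : ℕ × ℤ => if p.1 = 0 then F p else 0) := by
    refine (hg.summable_iff ?_).mp (h0.congr fun k => ?_)
    · rintro ⟨j, k⟩ hx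
      have : j ≠ 0 := fun hj => hx ⟨k, by simp [hj]⟩
      simp [this]
    · simp
  have e1 : Summable (fun p : ℕ × ℤ => if p.1 = 0 then 0 else F p) := by
    refine (hg'.summable_iff ?_).mp (h1.congr fun p => ?_)
    · rintro ⟨j, k⟩ hx
      have : j = 0 := by
        rcases Nat.eq_zero_or_pos j with h | h
        · exact h
        · exact absurd ⟨(j - 1, k), by simp [Prod.ext_iff]; omega⟩ hx
      simp [this]
    · simp
  refine (e0.add e1).congr fun p => ?_
  by_cases h : p.1 = 0 <;> simp [h]

def Wf (u : ℤ → ℤ → ℝ) : ℤ → ℤ → ℝ := fun j k => u j (k+1) - 2 * u j k + u j (k-1)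
def Qf (u : ℤ → ℤ → ℝ) : ℤ → ℤ → ℝ := fun j k => u (j+1) (k+1) - u (j+1) k - u j (k+1) + u j k

section
variable {u : ℤ → ℤ → ℝ}

lemma base_shift (hs : Summable fun p : ℕ × ℤ => (u p.1 p.2)^2) {a : ℤ} (b : ℤ) (ha : 0 ≤ a) :
    Summable fun p : ℕ × ℤ => (u (p.1 + a) (p.2 + b))^2 := by
  have hinj : Injective (fun p : ℕ × ℤ => (p.1 + a.toNat, p.2 + b)) := by
    intro p q hpq
    simp only [Prod.mk.injEq] at hpq
    exact Prod.ext (by omega) (by omega)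
  refine (hs.comp_injective hinj).congr fun p => ?_
  have : ((p.1 + a.toNat : ℕ) : ℤ) = (p.1 : ℤ) + a := by
    push_cast [Int.toNat_of_nonneg ha]; ring
  simp only [Function.comp, this]

lemma base_col (hs : Summable fun p : ℕ × ℤ => (u p.1 p.2)^2) (b : ℤ) :
    Summable fun k : ℤ => (u 0 (k + b))^2 := by
  have hinj : Injective (fun k : ℤ => ((0 : ℕ), k + b)) := fun x y hxy => by
    simpa using congrArg Prod.snd hxy
  refine (hs.comp_injective hinj).congr fun k => ?_
  simp

lemma base_shift' (hb : ∀ k, u (-1) k = u 0 k)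
    (hs : Summable fun p : ℕ × ℤ => (u p.1 p.2)^2) {a : ℤ} (b : ℤ) (ha : -1 ≤ a) :
    Summable fun p : ℕ × ℤ => (u (p.1 + a) (p.2 + b))^2 := by
  rcases eq_or_lt_of_le ha with h | h
  · subst h
    apply summable_of_pieces (F := fun p : ℕ × ℤ => (u ((p.1 : ℤ) + (-1)) (p.2 + b))^2)
    · refine (base_col hs b).congr fun k => ?_
      norm_num [hb]
    · refine (base_shift hs b (le_refl 0)).congr fun p => ?_
      push_cast; ring_nf
  · exact base_shift hs b (by omega)

lemma sqsW (hb : ∀ k, u (-1) k = u 0 k)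
    (hs : Summable fun p : ℕ × ℤ => (u p.1 p.2)^2) (a b : ℤ) (ha : -1 ≤ a) :
    Summable fun p : ℕ × ℤ => (Wf u (p.1 + a) (p.2 + b))^2 := by
  have h1 := base_shift' hb hs (b+1) ha
  have h2 := sqs_smul (-2) (base_shift' hb hs b ha)
  have h3 := base_shift' hb hs (b-1) ha
  refine (sqs_add (sqs_add h1 h2) h3).congr fun p => ?_
  simp only [Wf]; ring_nf

lemma sqsQ (hb : ∀ k, u (-1) k = u 0 k)
    (hs : Summable fun p : ℕ × ℤ => (u p.1 p.2)^2) (a b : ℤ) (ha : -1 ≤ a) :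
    Summable fun p : ℕ × ℤ => (Qf u (p.1 + a) (p.2 + b))^2 := by
  have h1 := base_shift' hb hs (b+1) (by omega : (-1:ℤ) ≤ a + 1)
  have h2 := sqs_smul (-1) (base_shift' hb hs b (by omega : (-1:ℤ) ≤ a + 1))
  have h3 := sqs_smul (-1) (base_shift' hb hs (b+1) ha)
  have h4 := base_shift' hb hs b ha
  refine (sqs_add (sqs_add (sqs_add h1 h2) h3) h4).congr fun p => ?_
  simp only [Qf]; ring_nf

end
end HL8

open HL8

/-- Lemma 8: bound on the quantity `B₂` in the half-space, with a boundary gain. -/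
theorem halfspace_lemma8 (α β : ℝ) (u : ℤ → ℤ → ℝ) (hu : memH u) :
    ((α ^ 2 + β ^ 2) / 2) * sqH (D1p (L2 u))
        + 4 * α * β * ipH (D10 (D20 u)) (L2 u) ≤
      (α ^ 2 + β ^ 2) * (sqH (L2 u) + sqH (D1p (D2p u)))
        - ((α ^ 2 + β ^ 2) / 2) * ∑' k : ℤ, (L2 u 0 k) ^ 2 := by
  obtain ⟨hb, hs⟩ := hu
  -- summability of squares of shifts of W and Q
  have hW00 : Summable fun p : ℕ × ℤ => (Wf u p.1 p.2)^2 := by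
    simpa using sqsW hb hs 0 0 (by norm_num)
  have hW10 : Summable fun p : ℕ × ℤ => (Wf u (p.1 + 1) p.2)^2 := by
    simpa using sqsW hb hs 1 0 (by norm_num)
  have hW01 : Summable fun p : ℕ × ℤ => (Wf u p.1 (p.2 + 1))^2 := by
    simpa using sqsW hb hs 0 1 (by norm_num)
  have hW11 : Summable fun p : ℕ × ℤ => (Wf u (p.1 + 1) (p.2 + 1))^2 := by
    simpa using sqsW hb hs 1 1 (by norm_num)
  have hQ00 : Summable fun p : ℕ × ℤ => (Qf u p.1 p.2)^2 := by
    simpa using sqsQ hb hs 0 0 (by norm_num)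
  have hQm0 : Summable fun p : ℕ × ℤ => (Qf u ((p.1:ℤ) - 1) p.2)^2 := by
    simpa [← sub_eq_add_neg] using sqsQ hb hs (-1) 0 (by norm_num)
  have hQ0m : Summable fun p : ℕ × ℤ => (Qf u p.1 (p.2 - 1))^2 := by
    simpa [← sub_eq_add_neg] using sqsQ hb hs 0 (-1) (by norm_num)
  have hQmm : Summable fun p : ℕ × ℤ => (Qf u ((p.1:ℤ) - 1) (p.2 - 1))^2 := by
    simpa [← sub_eq_add_neg] using sqsQ hb hs (-1) (-1) (by norm_num)
  have hQ01 : Summable fun p : ℕ × ℤ => (Qf u p.1 (p.2 + 1))^2 := by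
    simpa using sqsQ hb hs 0 1 (by norm_num)
  -- summability of products
  have hA1s : Summable fun p : ℕ × ℤ => Qf u p.1 p.2 * Wf u p.1 p.2 :=
    summable_mul_of_sq hQ00 hW00
  have hA2s : Summable fun p : ℕ × ℤ => Qf u p.1 p.2 * Wf u p.1 (p.2 + 1) :=
    summable_mul_of_sq hQ00 hW01
  have hTs : Summable fun p : ℕ × ℤ => Wf u ((p.1:ℤ) + 1) p.2 * Wf u p.1 p.2 :=
    summable_mul_of_sq hW10 hW00
  have hQW10 : Summable fun p : ℕ × ℤ => Qf u p.1 p.2 * Wf u ((p.1:ℤ) + 1) p.2 :=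
    summable_mul_of_sq hQ00 hW10
  have hQW11 : Summable fun p : ℕ × ℤ => Qf u p.1 p.2 * Wf u ((p.1:ℤ) + 1) (p.2 + 1) :=
    summable_mul_of_sq hQ00 hW11
  have hQQm : Summable fun p : ℕ × ℤ => Qf u p.1 p.2 * Qf u p.1 (p.2 - 1) :=
    summable_mul_of_sq hQ00 hQ0m
  have hQQp : Summable fun p : ℕ × ℤ => Qf u p.1 p.2 * Qf u p.1 (p.2 + 1) :=
    summable_mul_of_sq hQ00 hQ01
  have hQkmW : Summable fun p : ℕ × ℤ => Qf u p.1 (p.2 - 1) * Wf u p.1 p.2 :=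
    summable_mul_of_sq hQ0m hW00
  have hF2 : Summable fun p : ℕ × ℤ => Qf u ((p.1:ℤ) - 1) p.2 * Wf u p.1 p.2 :=
    summable_mul_of_sq hQm0 hW00
  have hF3 : Summable fun p : ℕ × ℤ => Qf u ((p.1:ℤ) - 1) p.2 * Wf u p.1 (p.2 + 1) :=
    summable_mul_of_sq hQm0 hW01
  have hWW : Summable fun p : ℕ × ℤ => Wf u p.1 p.2 * Wf u p.1 p.2 := by
    simpa [pow_two] using hW00
  have hQQ : Summable fun p : ℕ × ℤ => Qf u p.1 p.2 * Qf u p.1 p.2 := by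
    simpa [pow_two] using hQ00
  -- pointwise identities
  have c1 : ∀ j k : ℤ, Wf u (j+1) k = Wf u j k + Qf u j k - Qf u j (k-1) := by
    intro j k
    simp only [Wf, Qf, sub_add_cancel]
    ring
  have hQb : ∀ k : ℤ, Qf u (-1) k = 0 := by
    intro k
    simp only [Qf]
    norm_num [hb]
  -- rewriting the four quantities in the goal
  have eg1 : sqH (D1p (L2 u))
      = ∑' p : ℕ × ℤ, (Wf u ((p.1:ℤ) + 1) p.2 - Wf u p.1 p.2)^2 := by
    simp only [sqH]
    exact tsum_congr fun p => by simp only [D1p, L2, D2p, D2m, Wf]; ring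
  have eg2 : sqH (L2 u) = ∑' p : ℕ × ℤ, (Wf u p.1 p.2)^2 := by
    simp only [sqH]
    exact tsum_congr fun p => by simp only [L2, D2p, D2m, Wf]; ring
  have eg3 : sqH (D1p (D2p u)) = ∑' p : ℕ × ℤ, (Qf u p.1 p.2)^2 := by
    simp only [sqH]
    exact tsum_congr fun p => by simp only [D1p, D2p, Qf]; ring
  have eg4 : (∑' k : ℤ, (L2 u 0 k)^2) = ∑' k : ℤ, (Wf u 0 k)^2 :=
    tsum_congr fun k => by simp only [L2, D2p, D2m, Wf]; ring
  -- names for the main quantities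
  -- A: expansion of the square of the forward difference
  have eA : ∑' p : ℕ × ℤ, (Wf u ((p.1:ℤ) + 1) p.2 - Wf u p.1 p.2)^2
      = 2 * (∑' p : ℕ × ℤ, (Wf u p.1 p.2)^2) - (∑' k : ℤ, (Wf u 0 k)^2)
        - 2 * (∑' p : ℕ × ℤ, Wf u ((p.1:ℤ) + 1) p.2 * Wf u p.1 p.2) := by
    have e1 : ∑' p : ℕ × ℤ, (Wf u ((p.1:ℤ) + 1) p.2 - Wf u p.1 p.2)^2
        = ∑' p : ℕ × ℤ, (((Wf u ((p.1:ℤ) + 1) p.2)^2 + (Wf u p.1 p.2)^2)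
            - 2 * (Wf u ((p.1:ℤ) + 1) p.2 * Wf u p.1 p.2)) :=
      tsum_congr fun p => by ring
    rw [e1, Summable.tsum_sub (hW10.add hW00) (hTs.mul_left 2), Summable.tsum_add hW10 hW00, tsum_mul_left]
    have e4 : ∑' p : ℕ × ℤ, (Wf u ((p.1:ℤ) + 1) p.2)^2
        = (∑' p : ℕ × ℤ, (Wf u p.1 p.2)^2) - ∑' k : ℤ, (Wf u 0 k)^2 := by
      have hj := jshift hW00
      push_cast at hj
      linarith
    rw [e4]; ring
  -- C: identity for the shifted product T
  have eT3 : ∑' p : ℕ × ℤ, Qf u p.1 (p.2 - 1) * Wf u p.1 p.2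
      = ∑' p : ℕ × ℤ, Qf u p.1 p.2 * Wf u p.1 (p.2 + 1) := by
    have hk := kshift (fun p : ℕ × ℤ => Qf u p.1 p.2 * Wf u p.1 (p.2 + 1)) (-1)
    rw [← hk]
    exact tsum_congr fun p => by ring_nf
  have eT : ∑' p : ℕ × ℤ, Wf u ((p.1:ℤ) + 1) p.2 * Wf u p.1 p.2
      = (∑' p : ℕ × ℤ, (Wf u p.1 p.2)^2)
        + (∑' p : ℕ × ℤ, Qf u p.1 p.2 * Wf u p.1 p.2)
        - ∑' p : ℕ × ℤ, Qf u p.1 p.2 * Wf u p.1 (p.2 + 1) := by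
    have e1 : ∑' p : ℕ × ℤ, Wf u ((p.1:ℤ) + 1) p.2 * Wf u p.1 p.2
        = ∑' p : ℕ × ℤ, (Wf u p.1 p.2 * Wf u p.1 p.2
            + (Qf u p.1 p.2 * Wf u p.1 p.2 - Qf u p.1 (p.2 - 1) * Wf u p.1 p.2)) :=
      tsum_congr fun p => by rw [c1]; ring
    rw [e1, Summable.tsum_add hWW (hA1s.sub hQkmW), Summable.tsum_sub hA1s hQkmW, eT3]
    have e2 : ∑' p : ℕ × ℤ, Wf u (p.1:ℤ) p.2 * Wf u p.1 p.2
        = ∑' p : ℕ × ℤ, (Wf u p.1 p.2)^2 := tsum_congr fun p => (pow_two _).symm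
    rw [e2]; ring
  -- the scalar product identity
  have eIp : ipH (D10 (D20 u)) (L2 u)
      = ((∑' p : ℕ × ℤ, Qf u p.1 p.2 * Wf u p.1 p.2)
        + ∑' p : ℕ × ℤ, Qf u p.1 p.2 * Wf u p.1 (p.2 + 1)) / 2 := by
    have key : ∀ p : ℕ × ℤ, D10 (D20 u) (p.1:ℤ) p.2 * L2 u (p.1:ℤ) p.2
        = (Qf u p.1 p.2 * Wf u p.1 p.2 + Qf u ((p.1:ℤ) - 1) p.2 * Wf u p.1 p.2
          + Qf u p.1 (p.2 - 1) * Wf u p.1 p.2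
          + Qf u ((p.1:ℤ) - 1) (p.2 - 1) * Wf u p.1 p.2) / 4 := by
      intro p
      simp only [D10, D20, D1p, D1m, D2p, D2m, L2, Wf, Qf, sub_add_cancel]
      ring
    have hT4s : Summable fun p : ℕ × ℤ => Qf u ((p.1:ℤ) - 1) (p.2 - 1) * Wf u p.1 p.2 :=
      summable_mul_of_sq hQmm hW00
    -- T2 identity
    have iT2 : ∑' p : ℕ × ℤ, Qf u ((p.1:ℤ) - 1) p.2 * Wf u p.1 p.2
        = (∑' p : ℕ × ℤ, Qf u p.1 p.2 * Wf u p.1 p.2)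
          + (∑' p : ℕ × ℤ, (Qf u p.1 p.2)^2)
          - ∑' p : ℕ × ℤ, Qf u p.1 p.2 * Qf u p.1 (p.2 - 1) := by
      have hj := jshift hF2
      have h0 : (∑' k : ℤ, Qf u (-1) k * Wf u 0 k) = 0 := by
        have : ∀ k : ℤ, Qf u (-1) k * Wf u 0 k = 0 := fun k => by
          norm_num [hQb]
        rw [tsum_congr this, tsum_zero]
      push_cast at hj
      rw [h0, zero_add] at hj
      have hsucc : ∑' p : ℕ × ℤ, Qf u ((p.1:ℤ) + 1 - 1) p.2 * Wf u ((p.1:ℤ) + 1) p.2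
          = ∑' p : ℕ × ℤ, Qf u p.1 p.2 * Wf u ((p.1:ℤ) + 1) p.2 :=
        tsum_congr fun p => by ring_nf
      rw [hsucc] at hj
      rw [hj]
      have e1 : ∑' p : ℕ × ℤ, Qf u p.1 p.2 * Wf u ((p.1:ℤ) + 1) p.2
          = ∑' p : ℕ × ℤ, (Qf u p.1 p.2 * Wf u p.1 p.2
              + (Qf u p.1 p.2 * Qf u p.1 p.2 - Qf u p.1 p.2 * Qf u p.1 (p.2 - 1))) :=
        tsum_congr fun p => by rw [c1]; ring
      rw [e1, Summable.tsum_add hA1s (hQQ.sub hQQm), Summable.tsum_sub hQQ hQQm]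
      have e2 : ∑' p : ℕ × ℤ, Qf u (p.1:ℤ) p.2 * Qf u p.1 p.2
          = ∑' p : ℕ × ℤ, (Qf u p.1 p.2)^2 := tsum_congr fun p => (pow_two _).symm
      rw [e2]; ring
    -- T4 identity
    have iT4 : ∑' p : ℕ × ℤ, Qf u ((p.1:ℤ) - 1) (p.2 - 1) * Wf u p.1 p.2
        = (∑' p : ℕ × ℤ, Qf u p.1 p.2 * Wf u p.1 (p.2 + 1))
          + (∑' p : ℕ × ℤ, Qf u p.1 p.2 * Qf u p.1 (p.2 + 1))
          - ∑' p : ℕ × ℤ, (Qf u p.1 p.2)^2 := by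
      have hk := kshift (fun p : ℕ × ℤ => Qf u ((p.1:ℤ) - 1) p.2 * Wf u p.1 (p.2 + 1)) (-1)
      have step1 : ∑' p : ℕ × ℤ, Qf u ((p.1:ℤ) - 1) (p.2 - 1) * Wf u p.1 p.2
          = ∑' p : ℕ × ℤ, Qf u ((p.1:ℤ) - 1) p.2 * Wf u p.1 (p.2 + 1) := by
        rw [← hk]
        exact tsum_congr fun p => by ring_nf
      rw [step1]
      have hj := jshift hF3
      have h0 : (∑' k : ℤ, Qf u (-1) k * Wf u 0 (k + 1)) = 0 := by
        have : ∀ k : ℤ, Qf u (-1) k * Wf u 0 (k + 1) = 0 := fun k => by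
          norm_num [hQb]
        rw [tsum_congr this, tsum_zero]
      push_cast at hj
      rw [h0, zero_add] at hj
      have hsucc : ∑' p : ℕ × ℤ, Qf u ((p.1:ℤ) + 1 - 1) p.2 * Wf u ((p.1:ℤ) + 1) (p.2 + 1)
          = ∑' p : ℕ × ℤ, Qf u p.1 p.2 * Wf u ((p.1:ℤ) + 1) (p.2 + 1) :=
        tsum_congr fun p => by ring_nf
      rw [hsucc] at hj
      rw [hj]
      have e1 : ∑' p : ℕ × ℤ, Qf u p.1 p.2 * Wf u ((p.1:ℤ) + 1) (p.2 + 1)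
          = ∑' p : ℕ × ℤ, (Qf u p.1 p.2 * Wf u p.1 (p.2 + 1)
              + (Qf u p.1 p.2 * Qf u p.1 (p.2 + 1) - Qf u p.1 p.2 * Qf u p.1 p.2)) := by
        refine tsum_congr fun p => ?_
        have := c1 (p.1:ℤ) (p.2 + 1)
        simp only [add_sub_cancel_right] at this
        rw [this]; ring
      rw [e1, Summable.tsum_add hA2s (hQQp.sub hQQ), Summable.tsum_sub hQQp hQQ]
      have e2 : ∑' p : ℕ × ℤ, Qf u (p.1:ℤ) p.2 * Qf u p.1 p.2
          = ∑' p : ℕ × ℤ, (Qf u p.1 p.2)^2 := tsum_congr fun p => (pow_two _).symm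
      rw [e2]; ring
    -- C = C'
    have iCC : ∑' p : ℕ × ℤ, Qf u p.1 p.2 * Qf u p.1 (p.2 - 1)
        = ∑' p : ℕ × ℤ, Qf u p.1 p.2 * Qf u p.1 (p.2 + 1) := by
      have hk := kshift (fun p : ℕ × ℤ => Qf u p.1 p.2 * Qf u p.1 (p.2 + 1)) (-1)
      rw [← hk]
      exact tsum_congr fun p => by rw [mul_comm]; ring_nf
    -- put things together
    simp only [ipH]
    rw [tsum_congr key]
    have esplit : ∑' p : ℕ × ℤ, (Qf u p.1 p.2 * Wf u p.1 p.2
          + Qf u ((p.1:ℤ) - 1) p.2 * Wf u p.1 p.2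
          + Qf u p.1 (p.2 - 1) * Wf u p.1 p.2
          + Qf u ((p.1:ℤ) - 1) (p.2 - 1) * Wf u p.1 p.2) / 4
        = ((∑' p : ℕ × ℤ, Qf u p.1 p.2 * Wf u p.1 p.2)
          + (∑' p : ℕ × ℤ, Qf u ((p.1:ℤ) - 1) p.2 * Wf u p.1 p.2)
          + (∑' p : ℕ × ℤ, Qf u p.1 (p.2 - 1) * Wf u p.1 p.2)
          + (∑' p : ℕ × ℤ, Qf u ((p.1:ℤ) - 1) (p.2 - 1) * Wf u p.1 p.2)) / 4 := by
      rw [tsum_div_const, Summable.tsum_add ((hA1s.add hF2).add hQkmW) hT4s,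
        Summable.tsum_add (hA1s.add hF2) hQkmW, Summable.tsum_add hA1s hF2]
    rw [esplit, iT2, eT3, iT4, iCC]
    ring
  -- the two scalar-product bounds
  have bnd1 : 0 ≤ (∑' p : ℕ × ℤ, (Qf u p.1 p.2)^2) + (∑' p : ℕ × ℤ, (Wf u p.1 p.2)^2)
      + 2 * ∑' p : ℕ × ℤ, Qf u p.1 p.2 * Wf u p.1 p.2 := by
    have hpos := tsum_nonneg (L := SummationFilter.unconditional _) (fun p : ℕ × ℤ => sq_nonneg (Qf u p.1 p.2 + Wf u p.1 p.2))
    have e : ∑' p : ℕ × ℤ, (Qf u p.1 p.2 + Wf u p.1 p.2)^2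
        = (∑' p : ℕ × ℤ, (Qf u p.1 p.2)^2) + (∑' p : ℕ × ℤ, (Wf u p.1 p.2)^2)
          + 2 * ∑' p : ℕ × ℤ, Qf u p.1 p.2 * Wf u p.1 p.2 := by
      have e1 : ∑' p : ℕ × ℤ, (Qf u p.1 p.2 + Wf u p.1 p.2)^2
          = ∑' p : ℕ × ℤ, (((Qf u p.1 p.2)^2 + (Wf u p.1 p.2)^2)
              + 2 * (Qf u p.1 p.2 * Wf u p.1 p.2)) := tsum_congr fun p => by ring
      rw [e1, Summable.tsum_add (hQ00.add hW00) (hA1s.mul_left 2), Summable.tsum_add hQ00 hW00, tsum_mul_left]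
    linarith
  have bnd2 : 2 * (∑' p : ℕ × ℤ, Qf u p.1 p.2 * Wf u p.1 (p.2 + 1))
      ≤ (∑' p : ℕ × ℤ, (Qf u p.1 p.2)^2) + (∑' p : ℕ × ℤ, (Wf u p.1 p.2)^2) := by
    have hpos := tsum_nonneg (L := SummationFilter.unconditional _) (fun p : ℕ × ℤ => sq_nonneg (Qf u p.1 p.2 - Wf u p.1 (p.2 + 1)))
    have eNw' : ∑' p : ℕ × ℤ, (Wf u p.1 (p.2 + 1))^2 = ∑' p : ℕ × ℤ, (Wf u p.1 p.2)^2 :=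
      kshift (fun p : ℕ × ℤ => (Wf u p.1 p.2)^2) 1
    have e : ∑' p : ℕ × ℤ, (Qf u p.1 p.2 - Wf u p.1 (p.2 + 1))^2
        = (∑' p : ℕ × ℤ, (Qf u p.1 p.2)^2) + (∑' p : ℕ × ℤ, (Wf u p.1 p.2)^2)
          - 2 * ∑' p : ℕ × ℤ, Qf u p.1 p.2 * Wf u p.1 (p.2 + 1) := by
      have e1 : ∑' p : ℕ × ℤ, (Qf u p.1 p.2 - Wf u p.1 (p.2 + 1))^2
          = ∑' p : ℕ × ℤ, (((Qf u p.1 p.2)^2 + (Wf u p.1 (p.2 + 1))^2)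
              - 2 * (Qf u p.1 p.2 * Wf u p.1 (p.2 + 1))) := tsum_congr fun p => by ring
      rw [e1, Summable.tsum_sub (hQ00.add hW01) (hA2s.mul_left 2), Summable.tsum_add hQ00 hW01, tsum_mul_left,
        eNw']
    linarith
  -- final assembly
  rw [eg1, eg2, eg3, eg4, eIp, eA, eT]
  nlinarith [mul_nonneg (sq_nonneg (α - β))
      (by linarith [bnd1] : (0:ℝ) ≤ (∑' p : ℕ × ℤ, (Qf u p.1 p.2)^2)
        + (∑' p : ℕ × ℤ, (Wf u p.1 p.2)^2)
        + 2 * ∑' p : ℕ × ℤ, Qf u p.1 p.2 * Wf u p.1 p.2),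
    mul_nonneg (sq_nonneg (α + β))
      (by linarith [bnd2] : (0:ℝ) ≤ (∑' p : ℕ × ℤ, (Qf u p.1 p.2)^2)
        + (∑' p : ℕ × ℤ, (Wf u p.1 p.2)^2)
        - 2 * ∑' p : ℕ × ℤ, Qf u p.1 p.2 * Wf u p.1 (p.2 + 1))]
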